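/- arXiv:1106.5531 — 3 statements merged into one kernel-verified Lean document; each statement's English description precedes it below -/
import Mathlib

section
/- Let r, n, m be natural numbers with n ≥ 1, and let p_m(x) = ∑_{i=0}^{m} x^i/i! as a polynomial over ℚ. Then the number of functions f : Fin r → Fin n such that every fiber has cardinality at most m equals r! times the coefficient of x^r in the polynomial (p_m(x))^n. -/
open Polynomial Finset

def ballCount (r n m : ℕ) : ℕ :=
  (((Finset.univ : Finset (Fin r → Fin n)).filter
      (fun f => ∀ j : Fin n,
        ((Finset.univ : Finset (Fin r)).filter (fun k => f k = j)).card ≤ m)).card)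

lemma fiber_card_eq {r c n : ℕ} (s : Finset (Fin r)) (e : Fin c ≃ {x : Fin r // x ∈ sᶜ})
    (f : Fin r → Fin (n + 1)) (hlast : ∀ k, f k = Fin.last n ↔ k ∈ s) (j : Fin n) :
    (Finset.univ.filter fun idx : Fin c => f ((e idx : {x : Fin r // x ∈ sᶜ}) : Fin r)
        = Fin.castSucc j).card
      = (Finset.univ.filter fun k : Fin r => f k = Fin.castSucc j).card := by
  apply Finset.card_bij (fun idx _ => ((e idx : {x : Fin r // x ∈ sᶜ}) : Fin r))
  · intro a ha
    simp only [Finset.mem_filter, Finset.mem_univ, true_and] at ha ⊢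
    exact ha
  · intro a1 _ a2 _ h
    exact e.injective (Subtype.val_injective h)
  · intro k hk
    have h1 : f k = Fin.castSucc j := (Finset.mem_filter.mp hk).2
    have h2 : k ∉ s := by
      rw [← hlast, h1]
      exact fun h => (Fin.castSucc_lt_last j).ne h
    refine ⟨e.symm ⟨k, Finset.mem_compl.mpr h2⟩, by simp [h1], by simp⟩

lemma last_iff {r n : ℕ} (f : Fin r → Fin (n+1)) (s : Finset (Fin r))
    (hQ : Finset.univ.filter (fun k => f k = Fin.last n) = s) :
    ∀ k, f k = Fin.last n ↔ k ∈ s := by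
  intro k
  constructor
  · intro h
    have : k ∈ Finset.univ.filter (fun k => f k = Fin.last n) :=
      Finset.mem_filter.mpr ⟨Finset.mem_univ _, h⟩
    rwa [hQ] at this
  · intro hk
    have : k ∈ Finset.univ.filter (fun k => f k = Fin.last n) := by rw [hQ]; exact hk
    exact (Finset.mem_filter.mp this).2

lemma key_count (r n m b : ℕ) (s : Finset (Fin r)) (hb : s.card = b) :
    ((((Finset.univ : Finset (Fin r → Fin (n+1))).filter
        (fun f => ∀ j : Fin (n+1),
          ((Finset.univ : Finset (Fin r)).filter (fun k => f k = j)).card ≤ m)).filter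
      (fun f => (Finset.univ.filter (fun k => f k = Fin.last n)) = s)).card)
      = if b ≤ m then ballCount (r - b) n m else 0 := by
  by_cases hbm : b ≤ m
  swap
  · rw [if_neg hbm, Finset.card_eq_zero, Finset.eq_empty_iff_forall_notMem]
    intro f hf
    rw [Finset.mem_filter, Finset.mem_filter] at hf
    exact hbm (hb ▸ hf.2 ▸ hf.1.2 (Fin.last n))
  rw [if_pos hbm, ballCount]
  have hcompl : Fintype.card {x : Fin r // x ∈ sᶜ} = r - b := by
    simp [Fintype.card_coe, Finset.card_compl, hb]
  set e : Fin (r - b) ≃ {x : Fin r // x ∈ sᶜ} := (Fintype.equivFinOfCardEq hcompl).symm with he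
  have hns : ∀ idx : Fin (r - b), ((e idx : {x : Fin r // x ∈ sᶜ}) : Fin r) ∉ s :=
    fun idx => Finset.mem_compl.mp (e idx).2
  have hsymm_apply : ∀ idx : Fin (r - b),
      e.symm ⟨((e idx : {x : Fin r // x ∈ sᶜ}) : Fin r),
        Finset.mem_compl.mpr (hns idx)⟩ = idx := by
    intro idx
    have h1 : (⟨((e idx : {x : Fin r // x ∈ sᶜ}) : Fin r), Finset.mem_compl.mpr (hns idx)⟩
        : {x : Fin r // x ∈ sᶜ}) = e idx := Subtype.ext rfl
    rw [h1, Equiv.symm_apply_apply]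
  symm
  apply Finset.card_bij (fun (g : Fin (r-b) → Fin n) _ => (fun k : Fin r =>
    if hk : k ∈ s then Fin.last n
    else Fin.castSucc (g (e.symm ⟨k, Finset.mem_compl.mpr hk⟩))))
  · -- maps into A
    intro g hg
    have hPg : ∀ j : Fin n,
        ((Finset.univ : Finset (Fin (r-b))).filter (fun k => g k = j)).card ≤ m :=
      (Finset.mem_filter.mp hg).2
    set F : Fin r → Fin (n+1) := fun k =>
      if hk : k ∈ s then Fin.last n
      else Fin.castSucc (g (e.symm ⟨k, Finset.mem_compl.mpr hk⟩)) with hF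
    have hlast : ∀ k, F k = Fin.last n ↔ k ∈ s := by
      intro k
      by_cases hk : k ∈ s
      · simp [hF, hk]
      · simp only [hF, dif_neg hk]
        constructor
        · intro h; exact absurd h (fun h => (Fin.castSucc_lt_last _).ne h)
        · intro h; exact absurd h hk
    have hfib : Finset.univ.filter (fun k => F k = Fin.last n) = s := by
      ext k; rw [Finset.mem_filter]; simp [hlast k]
    rw [Finset.mem_filter, Finset.mem_filter]
    refine ⟨⟨Finset.mem_univ _, fun j => ?_⟩, hfib⟩
    induction j using Fin.lastCases with
    | last => rw [hfib, hb]; exact hbm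
    | cast j =>
      rw [← fiber_card_eq s e F hlast j]
      have hFe : ∀ idx : Fin (r-b),
          F ((e idx : {x : Fin r // x ∈ sᶜ}) : Fin r) = Fin.castSucc (g idx) := by
        intro idx
        rw [hF]
        simp only [dif_neg (hns idx)]
        rw [hsymm_apply idx]
      have hcongr : (Finset.univ.filter fun idx : Fin (r-b) =>
          F ((e idx : {x : Fin r // x ∈ sᶜ}) : Fin r) = Fin.castSucc j) =
          (Finset.univ.filter fun idx : Fin (r-b) => g idx = j) := by
        apply Finset.filter_congr
        intro idx _
        rw [hFe idx]
        exact Fin.castSucc_inj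
      rw [hcongr]
      exact hPg j
  · -- injective
    intro g1 _ g2 _ h
    funext idx
    have h' := congrFun h ((e idx : {x : Fin r // x ∈ sᶜ}) : Fin r)
    simp only [dif_neg (hns idx), hsymm_apply idx] at h'
    exact Fin.castSucc_injective n h'
  · -- surjective
    intro f hf
    have hP := (Finset.mem_filter.mp (Finset.mem_filter.mp hf).1).2
    have hQ := (Finset.mem_filter.mp hf).2
    have hlast : ∀ k, f k = Fin.last n ↔ k ∈ s := last_iff f s hQ
    have hne : ∀ idx : Fin (r-b), f ((e idx : {x : Fin r // x ∈ sᶜ}) : Fin r) ≠ Fin.last n := by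
      intro idx h
      exact hns idx ((hlast _).mp h)
    refine ⟨fun idx => Fin.castPred (f ((e idx : {x : Fin r // x ∈ sᶜ}) : Fin r)) (hne idx),
      ?_, ?_⟩
    · -- membership in B
      rw [Finset.mem_filter]
      refine ⟨Finset.mem_univ _, fun j => ?_⟩
      have hcongr : (Finset.univ.filter fun idx : Fin (r-b) =>
          Fin.castPred (f ((e idx : {x : Fin r // x ∈ sᶜ}) : Fin r)) (hne idx) = j) =
          (Finset.univ.filter fun idx : Fin (r-b) =>
            f ((e idx : {x : Fin r // x ∈ sᶜ}) : Fin r) = Fin.castSucc j) := by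
        apply Finset.filter_congr
        intro idx _
        constructor
        · intro h
          rw [← h, Fin.castSucc_castPred]
        · intro h
          apply Fin.castSucc_injective
          rw [Fin.castSucc_castPred, h]
      rw [hcongr, fiber_card_eq s e f hlast j]
      exact hP (Fin.castSucc j)
    · -- round trip
      funext k
      by_cases hk : k ∈ s
      · simp only [dif_pos hk]
        exact ((hlast k).mpr hk).symm
      · simp only [dif_neg hk]
        rw [Fin.castSucc_castPred]
        congr 1
        rw [Equiv.apply_symm_apply]

lemma ballCount_succ (r n m : ℕ) :
    ballCount r (n+1) m =
      ∑ b ∈ Finset.range (r+1),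
        r.choose b * (if b ≤ m then ballCount (r-b) n m else 0) := by
  rw [ballCount, Finset.card_eq_sum_card_fiberwise
    (f := fun f : Fin r → Fin (n+1) => Finset.univ.filter (fun k => f k = Fin.last n))
    (t := (Finset.univ : Finset (Fin r)).powerset)
    (fun f _ => Finset.mem_powerset.mpr (Finset.filter_subset _ _))]
  rw [Finset.sum_congr rfl (fun s _ => key_count r n m s.card s rfl)]
  rw [Finset.sum_powerset_apply_card (fun b => if b ≤ m then ballCount (r-b) n m else 0)]
  simp [Finset.card_univ]

lemma coeff_p (m k : ℕ) :
    ((∑ i ∈ Finset.range (m + 1),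
      Polynomial.C ((i.factorial : ℚ)⁻¹) * Polynomial.X ^ i)).coeff k =
      if k ≤ m then ((k.factorial : ℚ))⁻¹ else 0 := by
  rw [finset_sum_coeff]
  simp only [coeff_C_mul, coeff_X_pow]
  rw [Finset.sum_congr rfl (fun i _ => by rw [mul_ite, mul_one, mul_zero])]
  rw [Finset.sum_ite_eq (Finset.range (m+1)) k (fun i => ((i.factorial : ℚ))⁻¹)]
  simp [Nat.lt_succ_iff]

lemma ballCount_eq (m : ℕ) : ∀ n r : ℕ,
    (ballCount r n m : ℚ) =
      (r.factorial : ℚ) *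
        (((∑ i ∈ Finset.range (m + 1),
            Polynomial.C ((i.factorial : ℚ)⁻¹) * Polynomial.X ^ i) ^ n).coeff r) := by
  intro n
  induction n with
  | zero =>
    intro r
    rcases Nat.eq_zero_or_pos r with hr | hr
    · subst hr
      simp [ballCount]
    · have h1 : ballCount r 0 m = 0 := by
        simp only [ballCount]
        convert Finset.card_empty
        rw [Finset.eq_empty_iff_forall_notMem]
        intro f _
        exact (f ⟨0, hr⟩).elim0
      rw [h1]
      simp [Polynomial.coeff_one, Nat.pos_iff_ne_zero.mp hr]
  | succ n ih =>
    intro r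
    rw [ballCount_succ, pow_succ', coeff_mul,
      Finset.Nat.sum_antidiagonal_eq_sum_range_succ_mk, Nat.cast_sum, Finset.mul_sum]
    refine Finset.sum_congr rfl fun b hb => ?_
    have hbr : b ≤ r := Nat.lt_succ_iff.mp (Finset.mem_range.mp hb)
    rw [coeff_p]
    have hih := ih (r - b)
    push_cast [hih]
    by_cases hbm : b ≤ m
    · simp only [hbm, if_true]
      have hfac : ((r.choose b : ℚ)) * b.factorial * (r-b).factorial = r.factorial := by
        exact_mod_cast congrArg (Nat.cast : ℕ → ℚ)
          (Nat.choose_mul_factorial_mul_factorial hbr)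
      have hb0 : ((b.factorial : ℚ)) ≠ 0 := by positivity
      field_simp
      rw [← hfac]
      ring
    · simp [hbm]

/-- The number of functions `f : Fin r → Fin n` all of whose
fibers have cardinality at most `m` equals `r!` times the coefficient of `x^r`
in `(∑_{i=0}^{m} x^i / i!)^n`, as rational numbers. -/
theorem balls_in_boxes_count_eq_factorial_mul_coeff (r n m : ℕ) (hn : 1 ≤ n) :
    (((Finset.univ : Finset (Fin r → Fin n)).filter
        (fun f => ∀ j : Fin n,
          ((Finset.univ : Finset (Fin r)).filter (fun k => f k = j)).card ≤ m)).card : ℚ) =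
      (r.factorial : ℚ) *
        (((∑ i ∈ Finset.range (m + 1),
            Polynomial.C ((i.factorial : ℚ)⁻¹) * Polynomial.X ^ i) ^ n).coeff r) := by
  exact ballCount_eq m n r
end

section
/- Let K be a field of characteristic zero, let p = ∑_{i=0}^{m} p_i x^i be a polynomial over K of degree at most m, let n be a natural number, and write q_r for the coefficient of x^r in p^n. Then for every r ≥ 1: r · p₀ · q_r = ∑_{i=1}^{min(m,r)} ((n+1)·i − r) · p_i · q_{r−i}. -/
open Polynomial Finset

/-- The J.C.P. Miller recurrence: if `p` is a polynomial of
degree at most `m` over a field `K` of characteristic zero, `p_i = p.coeff i`,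
and `q_r` is the coefficient of `x^r` in `p^n`, then for every `r ≥ 1`,
`r · p₀ · q_r = ∑_{i=1}^{min(m,r)} ((n+1)·i − r) · p_i · q_{r−i}`. -/
theorem miller_recurrence {K : Type*} [Field K] [CharZero K]
    (p : Polynomial K) (m : ℕ) (hp : p.degree ≤ (m : ℕ)) (n : ℕ)
    (r : ℕ) (hr : 1 ≤ r) :
    (r : K) * p.coeff 0 * (p ^ n).coeff r =
      ∑ i ∈ Finset.Icc 1 (min m r),
        (((n : K) + 1) * (i : K) - (r : K)) * p.coeff i * (p ^ n).coeff (r - i) := by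
  obtain ⟨s, rfl⟩ : ∃ s, r = s + 1 := ⟨r - 1, (Nat.succ_pred_eq_of_pos hr).symm⟩
  have key : p * derivative (p ^ n) = C (n : K) * (derivative p * p ^ n) := by
    cases n with
    | zero => simp
    | succ k =>
      rw [derivative_pow, Nat.succ_sub_one]
      push_cast
      ring
  have hc : (p * derivative (p ^ n)).coeff s = (n : K) * ((derivative p * p ^ n).coeff s) := by
    rw [key, coeff_C_mul]
  simp only [coeff_mul, Finset.Nat.sum_antidiagonal_eq_sum_range_succ_mk,
    coeff_derivative] at hc
  have hext : ∑ i ∈ Finset.Icc 1 (m ⊓ (s + 1)),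
      (((n : K) + 1) * (i : K) - ((s + 1 : ℕ) : K)) * p.coeff i * (p ^ n).coeff (s + 1 - i)
      = ∑ i ∈ Finset.Icc 1 (s + 1),
      (((n : K) + 1) * (i : K) - ((s + 1 : ℕ) : K)) * p.coeff i * (p ^ n).coeff (s + 1 - i) := by
    refine Finset.sum_subset (Finset.Icc_subset_Icc_right (min_le_right _ _)) ?_
    intro i hi hni
    simp only [Finset.mem_Icc] at hi hni
    have him : m < i := by omega
    have hz : p.coeff i = 0 :=
      coeff_eq_zero_of_degree_lt (hp.trans_lt (by exact_mod_cast him))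
    simp [hz]
  rw [hext, show Finset.Icc 1 (s + 1) = Finset.Ico 1 (s + 2) from (Finset.Ico_add_one_right_eq_Icc 1 (s+1)).symm,
    Finset.sum_Ico_eq_sum_range]
  simp only [show s + 2 - 1 = s + 1 from rfl]
  rw [Finset.sum_range_succ' _ s] at hc
  rw [Finset.sum_range_succ] at hc
  rw [Finset.sum_range_succ]
  have hG : ∑ i ∈ Finset.range s,
      (((n : K) + 1) * ((1 + i : ℕ) : K) - ((s + 1 : ℕ) : K)) * p.coeff (1 + i)
        * (p ^ n).coeff (s + 1 - (1 + i))
      = (n : K) * (∑ i ∈ Finset.range s, p.coeff (i + 1) * ((i : K) + 1) * (p ^ n).coeff (s - i))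
        - ∑ i ∈ Finset.range s,
            p.coeff (i + 1) * ((p ^ n).coeff (s - (i + 1) + 1) * (((s - (i + 1) : ℕ) : K) + 1)) := by
    rw [Finset.mul_sum, ← Finset.sum_sub_distrib]
    refine Finset.sum_congr rfl fun i hi => ?_
    have hi' : i < s := Finset.mem_range.mp hi
    have e1 : s + 1 - (1 + i) = s - i := by omega
    have e2 : s - (i + 1) + 1 = s - i := by omega
    have e3 : 1 + i = i + 1 := by omega
    rw [e1, e2, e3, Nat.cast_sub (by omega : i + 1 ≤ s)]
    push_cast
    ring
  rw [hG]
  have e4 : s + 1 - (1 + s) = 0 := by omega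
  rw [e4, Nat.add_comm 1 s]
  simp only [Nat.sub_zero, Nat.sub_self] at hc ⊢
  push_cast at hc ⊢
  linear_combination hc
end

section
/- Let n, m be natural numbers, let p_m(x) = ∑_{i=0}^{m} x^i/i! over ℚ, and write q_r for the coefficient of x^r in (p_m(x))^n. Then for every r ≥ 1: r · q_r = ∑_{i=1}^{min(m,r)} ((n+1)·i − r) · q_{r−i} / i!. -/
open Polynomial Finset

private lemma trunc_coeff (m k : ℕ) :
    (∑ j ∈ Finset.range (m + 1), C ((j.factorial : ℚ)⁻¹) * X ^ j).coeff k
      = if k ≤ m then (k.factorial : ℚ)⁻¹ else 0 := by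
  rw [finset_sum_coeff]
  simp only [coeff_C_mul, coeff_X_pow, mul_ite, mul_one, mul_zero]
  rw [Finset.sum_ite_eq (Finset.range (m + 1)) k]
  simp [Nat.lt_succ_iff]

private lemma key_identity (p : ℚ[X]) (n : ℕ) :
    p * derivative (p ^ n) = C (n : ℚ) * (derivative p * p ^ n) := by
  rcases n with _ | n
  · simp
  · rw [derivative_pow]
    simp only [Nat.succ_sub_one, Nat.cast_succ]
    ring

/-- The J.C.P. Miller recurrence specialized to the truncated
exponential: if `q_r` denotes the coefficient of `x^r` in
`(∑_{k=0}^{m} x^k / k!)^n`, then for every `r ≥ 1`,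
`r · q_r = ∑_{i=1}^{min(m,r)} ((n+1)·i − r) · q_{r−i} / i!`. -/
theorem miller_recurrence_truncExp (n m : ℕ) (r : ℕ) (hr : 1 ≤ r) :
    (r : ℚ) * (((∑ k ∈ Finset.range (m + 1),
          Polynomial.C ((k.factorial : ℚ)⁻¹) * Polynomial.X ^ k) ^ n).coeff r) =
      ∑ i ∈ Finset.Icc 1 (min m r),
        (((n : ℚ) + 1) * (i : ℚ) - (r : ℚ)) *
          (((∑ k ∈ Finset.range (m + 1),
              Polynomial.C ((k.factorial : ℚ)⁻¹) * Polynomial.X ^ k) ^ n).coeff (r - i)) /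
          (i.factorial : ℚ) := by
  set P : ℚ[X] := ∑ k ∈ Finset.range (m + 1), C ((k.factorial : ℚ)⁻¹) * X ^ k with hPdef
  obtain ⟨s, rfl⟩ : ∃ s, r = s + 1 := ⟨r - 1, by omega⟩
  have EL : (P * derivative (P ^ n)).coeff s
      = ∑ i ∈ Finset.range (s + 1), P.coeff i * ((P ^ n).coeff (s - i + 1) * (((s - i : ℕ) : ℚ) + 1)) := by
    rw [coeff_mul, Finset.Nat.sum_antidiagonal_eq_sum_range_succ_mk]
    simp [coeff_derivative]
  have ER : (C (n : ℚ) * (derivative P * P ^ n)).coeff s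
      = (n : ℚ) * ∑ i ∈ Finset.range (s + 1), P.coeff (i + 1) * ((i : ℚ) + 1) * (P ^ n).coeff (s - i) := by
    rw [coeff_C_mul, coeff_mul, Finset.Nat.sum_antidiagonal_eq_sum_range_succ_mk]
    simp [coeff_derivative]
  have E : (∑ i ∈ Finset.range (s + 1), P.coeff i * ((P ^ n).coeff (s - i + 1) * (((s - i : ℕ) : ℚ) + 1)))
      = (n : ℚ) * ∑ i ∈ Finset.range (s + 1), P.coeff (i + 1) * ((i : ℚ) + 1) * (P ^ n).coeff (s - i) := by
    rw [← EL, ← ER, key_identity]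
  have hPc : ∀ k, P.coeff k = if k ≤ m then (k.factorial : ℚ)⁻¹ else 0 := by
    intro k; rw [hPdef, trunc_coeff]
  have hP0 : P.coeff 0 = 1 := by rw [hPc]; simp
  -- rewrite the left sum of E, splitting off the i = 0 term
  rw [Finset.sum_range_succ'] at E
  simp only [Nat.sub_zero, hP0, one_mul] at E
  have hA : (∑ i ∈ Finset.range (s + 1), P.coeff (i + 1) * (P ^ n).coeff (s - i) * ((s : ℚ) - i))
      = ∑ i ∈ Finset.range s, P.coeff (i + 1) * ((P ^ n).coeff (s - (i + 1) + 1) * ((↑(s - (i + 1)) : ℚ) + 1)) := by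
    rw [Finset.sum_range_succ]
    simp only [sub_self, mul_zero, add_zero]
    apply Finset.sum_congr rfl
    intro i hi
    have hi' : i < s := Finset.mem_range.mp hi
    have h1 : s - (i + 1) + 1 = s - i := by omega
    have h2 : ((↑(s - (i + 1)) : ℚ) + 1) = (s : ℚ) - i := by
      rw [Nat.cast_sub (by omega : i + 1 ≤ s)]
      push_cast; ring
    rw [h1, h2]; ring
  rw [← hA] at E
  -- rewrite the target right-hand side
  have hsub : Finset.Icc 1 (m ⊓ (s + 1)) ⊆ Finset.Icc 1 (s + 1) :=
    Finset.Icc_subset_Icc_right (min_le_right _ _)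
  have hC1 : (∑ i ∈ Finset.Icc 1 (m ⊓ (s + 1)),
        ((↑n + 1) * (↑i : ℚ) - ↑(s + 1)) * (P ^ n).coeff (s + 1 - i) / ↑i.factorial)
      = ∑ i ∈ Finset.Icc 1 (s + 1),
        ((↑n + 1) * (↑i : ℚ) - ↑(s + 1)) * P.coeff i * (P ^ n).coeff (s + 1 - i) := by
    rw [← Finset.sum_subset hsub (fun i hi hni => ?_)]
    · apply Finset.sum_congr rfl
      intro i hi
      have him : i ≤ m := le_trans (Finset.mem_Icc.mp hi).2 (min_le_left _ _)
      rw [hPc i, if_pos him]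
      field_simp
    · have hmi : m < i := by
        simp only [Finset.mem_Icc] at hi hni
        omega
      rw [hPc i, if_neg (by omega)]
      ring
  rw [hC1, ← Finset.Ico_add_one_right_eq_Icc, Finset.sum_Ico_eq_sum_range]
  simp only [Nat.add_sub_cancel]
  have hfin : (∑ i ∈ Finset.range (s + 1),
        ((↑n + 1) * (↑(1 + i) : ℚ) - ↑(s + 1)) * P.coeff (1 + i) * (P ^ n).coeff (s + 1 - (1 + i)))
      = ↑n * (∑ i ∈ Finset.range (s + 1), P.coeff (i + 1) * ((i : ℚ) + 1) * (P ^ n).coeff (s - i))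
        - ∑ i ∈ Finset.range (s + 1), P.coeff (i + 1) * (P ^ n).coeff (s - i) * ((s : ℚ) - i) := by
    rw [Finset.mul_sum, ← Finset.sum_sub_distrib]
    apply Finset.sum_congr rfl
    intro i hi
    have h3 : s + 1 - (1 + i) = s - i := by omega
    rw [h3, Nat.add_comm 1 i]
    push_cast
    ring
  rw [hfin]
  push_cast
  linarith [E]
end
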